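/- arXiv:1808.07007 — 7 statements merged into one kernel-verified Lean document; each statement's English description precedes it below -/
import Mathlib

section
/- Let H ⊆ ℝ be bounded and MS^aa(H) = {(x+y)/2 : x, y ∈ H}. Then the set of accumulation points of MS^aa(H) equals {(x+y)/2 : x, y ∈ H' } ∪ {(x+y)/2 : x ∈ H', y ∈ H}, where H' is the set of accumulation points of H. -/
open Set Filter

/-- The mean-set `MS^aa(H) = {(x+y)/2 : x, y ∈ H}`. -/
def msaa (H : Set ℝ) : Set ℝ := {z | ∃ x ∈ H, ∃ y ∈ H, z = (x + y) / 2}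

/-- ε-characterization of the derived set in ℝ. -/
lemma mem_derivedSet_real {S : Set ℝ} {x : ℝ} :
    x ∈ derivedSet S ↔ ∀ ε > 0, ∃ a ∈ S, a ≠ x ∧ |a - x| < ε := by
  rw [mem_derivedSet, accPt_iff_nhds]
  constructor
  · intro h ε hε
    obtain ⟨a, ⟨ha1, ha2⟩, ha3⟩ := h (Metric.ball x ε) (Metric.ball_mem_nhds x hε)
    exact ⟨a, ha2, ha3, by simpa [Real.dist_eq] using ha1⟩
  · intro h U hU
    obtain ⟨ε, hε, hball⟩ := Metric.mem_nhds_iff.mp hU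
    obtain ⟨a, haS, hane, halt⟩ := h ε hε
    exact ⟨a, ⟨hball (by simpa [Real.dist_eq] using halt), haS⟩, hane⟩

lemma half_mem_derivedSet {H : Set ℝ} {x y : ℝ}
    (hx : x ∈ derivedSet H) (hy : y ∈ closure H) :
    (x + y) / 2 ∈ derivedSet (msaa H) := by
  rw [mem_derivedSet_real] at hx ⊢
  intro ε hε
  obtain ⟨a, haH, hane, halt⟩ := hx ε hε
  have hax : 0 < |a - x| := abs_pos.mpr (sub_ne_zero.mpr hane)
  obtain ⟨b, hbH, hblt⟩ := Metric.mem_closure_iff.mp hy (min |a - x| ε) (lt_min hax hε)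
  rw [Real.dist_eq] at hblt
  have hby : |b - y| < min |a - x| ε := by rwa [abs_sub_comm]
  refine ⟨(a + b) / 2, ⟨a, haH, b, hbH, rfl⟩, ?_, ?_⟩
  · intro hcontra
    have h1 : a + b = x + y := by linarith
    have h2 : a - x = -(b - y) := by linarith
    rw [h2, abs_neg] at hax
    have := lt_of_lt_of_le hby (min_le_left _ _)
    rw [h2, abs_neg] at this
    exact absurd this (lt_irrefl _)
  · have heq : (a + b) / 2 - (x + y) / 2 = ((a - x) + (b - y)) / 2 := by ring
    rw [heq, abs_div, abs_two]
    have h1 : |(a - x) + (b - y)| ≤ |a - x| + |b - y| := abs_add_le _ _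
    have h2 : |b - y| < ε := lt_of_lt_of_le hby (min_le_right _ _)
    linarith

lemma tendsto_freq_ne_mem_derivedSet {H : Set ℝ} {u : ℕ → ℝ} {x : ℝ}
    (hu : ∀ n, u n ∈ H) (hlim : Filter.Tendsto u Filter.atTop (nhds x))
    (hfreq : ∃ᶠ n in Filter.atTop, u n ≠ x) : x ∈ derivedSet H := by
  rw [mem_derivedSet_real]
  intro ε hε
  have hev : ∀ᶠ n in Filter.atTop, |u n - x| < ε := by
    have := Metric.tendsto_atTop.mp hlim ε hε
    obtain ⟨N, hN⟩ := this
    exact Filter.eventually_atTop.mpr ⟨N, fun n hn => by simpa [Real.dist_eq] using hN n hn⟩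
  obtain ⟨n, hn1, hn2⟩ := (hfreq.and_eventually hev).exists
  exact ⟨u n, hu n, hn1, hn2⟩

theorem stmt_6 (H : Set ℝ) (hbb : BddBelow H) (hba : BddAbove H) :
    derivedSet (msaa H) =
      {z | ∃ x ∈ derivedSet H, ∃ y ∈ derivedSet H, z = (x + y) / 2} ∪
      {z | ∃ x ∈ derivedSet H, ∃ y ∈ H, z = (x + y) / 2} := by
  ext z
  constructor
  · intro hz
    -- z is an accumulation point of msaa H
    rw [mem_derivedSet, accPt_principal_iff_clusterPt, ← mem_closure_iff_clusterPt] at hz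
    obtain ⟨w, hw, hwlim⟩ := mem_closure_iff_seq_limit.mp hz
    -- extract x n, y n
    choose u hu v hv hw2 using fun n => (hw n).1
    have hne : ∀ n, w n ≠ z := fun n => (hw n).2
    have hbdd : Bornology.IsBounded H := by
      obtain ⟨m, hm⟩ := hbb; obtain ⟨M, hM⟩ := hba
      exact (Metric.isBounded_Icc m M).subset (fun a ha => ⟨hm ha, hM ha⟩)
    obtain ⟨x, hxcl, φ, hφ, hxlim⟩ := tendsto_subseq_of_bounded hbdd hu
    obtain ⟨y, hycl, ψ, hψ, hylim⟩ := tendsto_subseq_of_bounded hbdd (fun n => hv (φ n))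
    set σ : ℕ → ℕ := φ ∘ ψ with hσ
    have hσmono : StrictMono σ := hφ.comp hψ
    have hxlim' : Filter.Tendsto (u ∘ σ) Filter.atTop (nhds x) :=
      hxlim.comp hψ.tendsto_atTop
    have hylim' : Filter.Tendsto (v ∘ σ) Filter.atTop (nhds y) := hylim
    have hwlim' : Filter.Tendsto (w ∘ σ) Filter.atTop (nhds z) :=
      hwlim.comp hσmono.tendsto_atTop
    have hzeq : z = (x + y) / 2 := by
      have : Filter.Tendsto (w ∘ σ) Filter.atTop (nhds ((x + y) / 2)) := by
        have : (w ∘ σ) = fun n => ((u ∘ σ) n + (v ∘ σ) n) / 2 := by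
          funext n; exact hw2 (σ n)
        rw [this]
        exact (hxlim'.add hylim').div_const 2
      exact tendsto_nhds_unique hwlim' this
    -- at least one of u∘σ ≠ x, v∘σ ≠ y frequently
    have hkey : (∃ᶠ n in Filter.atTop, (u ∘ σ) n ≠ x) ∨
        (∃ᶠ n in Filter.atTop, (v ∘ σ) n ≠ y) := by
      by_contra hc
      push_neg at hc
      obtain ⟨h1, h2⟩ := hc
      have := (h1.and h2).exists
      obtain ⟨n, hn1, hn2⟩ := this
      have hn1' : u (σ n) = x := hn1
      have hn2' : v (σ n) = y := hn2
      apply hne (σ n)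
      rw [hw2 (σ n), hn1', hn2', hzeq]
    rcases hkey with hfx | hfy
    · have hxds : x ∈ derivedSet H :=
        tendsto_freq_ne_mem_derivedSet (fun n => hu (σ n)) hxlim' hfx
      -- y ∈ closure H = H ∪ derivedSet H
      rcases clusterPt_principal.mp (mem_closure_iff_clusterPt.mp hycl) with hyH | hyds
      · exact Or.inr ⟨x, hxds, y, hyH, hzeq⟩
      · exact Or.inl ⟨x, hxds, y, hyds, hzeq⟩
    · have hyds : y ∈ derivedSet H :=
        tendsto_freq_ne_mem_derivedSet (fun n => hv (σ n)) hylim' hfy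
      rcases clusterPt_principal.mp (mem_closure_iff_clusterPt.mp hxcl) with hxH | hxds
      · exact Or.inr ⟨y, hyds, x, hxH, by rw [hzeq]; ring⟩
      · exact Or.inl ⟨x, hxds, y, hyds, hzeq⟩
  · rintro (⟨x, hx, y, hy, rfl⟩ | ⟨x, hx, y, hy, rfl⟩)
    · exact half_mem_derivedSet hx (derivedSet_subset_closure H hy)
    · exact half_mem_derivedSet hx (subset_closure hy)
end

section
/- There exists an unbounded set H ⊆ ℝ (e.g., H = {-n - 1/n : n ∈ ℕ} ∪ {n + 2/n : n ∈ ℕ}) such that H has no accumulation points but 0 is an accumulation point of MS^aa(H) = {(x+y)/2 : x, y ∈ H}. -/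
open Set Filter Topology

noncomputable def fA (n : ℕ) : ℝ := -(n : ℝ) - 1
noncomputable def fB (n : ℕ) : ℝ := (n : ℝ) + 1 + 1 / ((n : ℝ) + 1)

noncomputable def Hset : Set ℝ := Set.range fA ∪ Set.range fB

lemma Hset_inter_finite (a b : ℝ) : (Hset ∩ Set.Icc a b).Finite := by
  obtain ⟨N, hN⟩ := exists_nat_ge (|a| + |b|)
  have : Hset ∩ Set.Icc a b ⊆ (fA '' (Set.Iic N)) ∪ (fB '' (Set.Iic N)) := by
    rintro z ⟨hz, hza, hzb⟩
    rcases hz with ⟨n, rfl⟩ | ⟨n, rfl⟩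
    · left
      refine ⟨n, ?_, rfl⟩
      simp only [Set.mem_Iic]
      have h1 : (n : ℝ) ≤ -a - 1 := by unfold fA at hza; linarith
      have h2 : (n : ℝ) ≤ N := by
        have := abs_nonneg b
        have := neg_abs_le a
        linarith
      exact_mod_cast h2
    · right
      refine ⟨n, ?_, rfl⟩
      simp only [Set.mem_Iic]
      have hp : 0 < 1 / ((n : ℝ) + 1) := by positivity
      have h1 : (n : ℝ) ≤ b - 1 := by unfold fB at hzb; linarith
      have h2 : (n : ℝ) ≤ N := by
        have := abs_nonneg a
        have := le_abs_self b
        linarith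
      exact_mod_cast h2
  exact Set.Finite.subset (((Set.finite_Iic N).image fA).union ((Set.finite_Iic N).image fB)) this

theorem stmt_7 :
    ∃ H : Set ℝ, ¬(BddBelow H ∧ BddAbove H) ∧
      (∀ x : ℝ, ¬ AccPt x (𝓟 H)) ∧ AccPt 0 (𝓟 (msaa H)) := by
  refine ⟨Hset, ?_, ?_, ?_⟩
  · rintro ⟨-, ⟨M, hM⟩⟩
    obtain ⟨N, hN⟩ := exists_nat_gt M
    have : fB N ≤ M := hM (Set.mem_union_right _ ⟨N, rfl⟩)
    have hp : 0 < 1 / ((N : ℝ) + 1) := by positivity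
    unfold fB at this
    linarith
  · intro x hacc
    have h2 : AccPt x (𝓟 (Set.Icc (x - 1) (x + 1) ∩ Hset)) :=
      hacc.nhds_inter (Icc_mem_nhds (by linarith) (by linarith))
    rw [accPt_principal_iff_clusterPt] at h2
    have h3 : x ∈ closure ((Set.Icc (x - 1) (x + 1) ∩ Hset) \ {x}) :=
      mem_closure_iff_clusterPt.mpr h2
    have hfin : ((Set.Icc (x - 1) (x + 1) ∩ Hset) \ {x}).Finite := by
      have := Hset_inter_finite (x-1) (x+1)
      rw [Set.inter_comm] at this
      exact this.diff
    rw [hfin.isClosed.closure_eq] at h3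
    exact h3.2 rfl
  · rw [accPt_principal_iff_clusterPt, ← mem_closure_iff_clusterPt]
    have htend : Tendsto (fun n : ℕ => 1 / (2 * ((n : ℝ) + 1))) atTop (𝓝 0) := by
      have := tendsto_one_div_add_atTop_nhds_zero_nat (𝕜 := ℝ)
      have h2 : Tendsto (fun n : ℕ => (2 : ℝ) * ((n : ℝ) + 1)) atTop atTop := by
        apply Filter.Tendsto.const_mul_atTop (by norm_num)
        exact tendsto_atTop_add_const_right _ _ tendsto_natCast_atTop_atTop
      have h3 := h2.inv_tendsto_atTop
      refine h3.congr fun n => ?_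
      simp [one_div]
    refine mem_closure_of_tendsto htend (Eventually.of_forall fun n => ?_)
    constructor
    · refine ⟨fA n, Set.mem_union_left _ ⟨n, rfl⟩, fB n, Set.mem_union_right _ ⟨n, rfl⟩, ?_⟩
      unfold fA fB
      field_simp
      ring
    · have hp : 0 < 1 / (2 * ((n : ℝ) + 1)) := by positivity
      simp only [Set.mem_singleton_iff]
      exact ne_of_gt hp
end

section
/- Let H, K ⊆ ℝ be Borel measurable with λ(H △ K) = d, where △ is symmetric difference. For z ∈ ℝ let H_z = {(x,y) ∈ H × H : (x+y)/2 = z} and similarly K_z, and let λ₁ denote 1-dimensional Hausdorff measure in the plane. Then |λ₁(H_z) − λ₁(K_z)| ≤ 2√2·d. -/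
open Set MeasureTheory

lemma aux_sub (c : ℝ) : LipschitzWith 1 (fun x : ℝ => c - x) := by
  apply LipschitzWith.of_dist_le_mul
  intro x y
  have h : (c - x) - (c - y) = -(x - y) := by ring
  rw [Real.dist_eq, Real.dist_eq, h, abs_neg]; simp

lemma aux_lip1 (z : ℝ) : LipschitzWith 1 (fun x : ℝ => (x, 2*z - x)) := by
  have h := LipschitzWith.prodMk LipschitzWith.id (aux_sub (2*z))
  simpa using h

lemma aux_lip2 (z : ℝ) : LipschitzWith 1 (fun x : ℝ => (2*z - x, x)) := by
  have h := LipschitzWith.prodMk (aux_sub (2*z)) LipschitzWith.id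
  simpa using h

lemma aux_img (z : ℝ) (f : ℝ → ℝ × ℝ) (hf : LipschitzWith 1 f) (A : Set ℝ) :
    μH[1] (f '' A) ≤ volume A := by
  have := hf.hausdorffMeasure_image_le (d := 1) zero_le_one A
  simpa [MeasureTheory.hausdorffMeasure_real] using this

lemma aux_bound (H K : Set ℝ) (z : ℝ) :
    μH[1] {p : ℝ × ℝ | p.1 ∈ H ∧ p.2 ∈ H ∧ (p.1 + p.2) / 2 = z} ≤
      μH[1] {p : ℝ × ℝ | p.1 ∈ K ∧ p.2 ∈ K ∧ (p.1 + p.2) / 2 = z}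
        + 2 * volume (symmDiff H K) := by
  set A := H \ K with hA
  have hsub : {p : ℝ × ℝ | p.1 ∈ H ∧ p.2 ∈ H ∧ (p.1 + p.2) / 2 = z} ⊆
      {p : ℝ × ℝ | p.1 ∈ K ∧ p.2 ∈ K ∧ (p.1 + p.2) / 2 = z}
        ∪ ((fun x : ℝ => (x, 2*z - x)) '' A ∪ (fun x : ℝ => (2*z - x, x)) '' A) := by
    rintro ⟨x, y⟩ ⟨hx, hy, hz⟩
    have hxy : y = 2*z - x := by linarith [hz]
    have hyx : x = 2*z - y := by linarith [hz]
    by_cases h1 : x ∈ K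
    · by_cases h2 : y ∈ K
      · exact Or.inl ⟨h1, h2, hz⟩
      · exact Or.inr (Or.inr ⟨y, ⟨hy, h2⟩, by simp [hyx.symm]⟩)
    · exact Or.inr (Or.inl ⟨x, ⟨hx, h1⟩, by simp [hxy.symm]⟩)
  have hAle : volume A ≤ volume (symmDiff H K) :=
    measure_mono (by rw [Set.symmDiff_def]; exact Set.subset_union_left)
  calc μH[1] {p : ℝ × ℝ | p.1 ∈ H ∧ p.2 ∈ H ∧ (p.1 + p.2) / 2 = z}
      ≤ μH[1] ({p : ℝ × ℝ | p.1 ∈ K ∧ p.2 ∈ K ∧ (p.1 + p.2) / 2 = z}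
        ∪ ((fun x : ℝ => (x, 2*z - x)) '' A ∪ (fun x : ℝ => (2*z - x, x)) '' A)) :=
        measure_mono hsub
    _ ≤ μH[1] {p : ℝ × ℝ | p.1 ∈ K ∧ p.2 ∈ K ∧ (p.1 + p.2) / 2 = z}
        + (μH[1] ((fun x : ℝ => (x, 2*z - x)) '' A) + μH[1] ((fun x : ℝ => (2*z - x, x)) '' A)) :=
        le_trans (measure_union_le _ _) (by gcongr; exact measure_union_le _ _)
    _ ≤ μH[1] {p : ℝ × ℝ | p.1 ∈ K ∧ p.2 ∈ K ∧ (p.1 + p.2) / 2 = z}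
        + (volume (symmDiff H K) + volume (symmDiff H K)) := by
        gcongr
        · exact le_trans (aux_img z _ (aux_lip1 z) A) hAle
        · exact le_trans (aux_img z _ (aux_lip2 z) A) hAle
    _ = μH[1] {p : ℝ × ℝ | p.1 ∈ K ∧ p.2 ∈ K ∧ (p.1 + p.2) / 2 = z}
        + 2 * volume (symmDiff H K) := by ring

theorem stmt_10 (H K : Set ℝ) (hH : MeasurableSet H) (hK : MeasurableSet K)
    (d : ENNReal) (hd : volume (symmDiff H K) = d) (z : ℝ) :
    μH[1] {p : ℝ × ℝ | p.1 ∈ H ∧ p.2 ∈ H ∧ (p.1 + p.2) / 2 = z} ≤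
      μH[1] {p : ℝ × ℝ | p.1 ∈ K ∧ p.2 ∈ K ∧ (p.1 + p.2) / 2 = z}
        + ENNReal.ofReal (2 * Real.sqrt 2) * d ∧
    μH[1] {p : ℝ × ℝ | p.1 ∈ K ∧ p.2 ∈ K ∧ (p.1 + p.2) / 2 = z} ≤
      μH[1] {p : ℝ × ℝ | p.1 ∈ H ∧ p.2 ∈ H ∧ (p.1 + p.2) / 2 = z}
        + ENNReal.ofReal (2 * Real.sqrt 2) * d := by
  have h2 : (2 : ENNReal) ≤ ENNReal.ofReal (2 * Real.sqrt 2) := by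
    rw [show (2 : ENNReal) = ENNReal.ofReal 2 by simp]
    apply ENNReal.ofReal_le_ofReal
    nlinarith [Real.sq_sqrt (by norm_num : (2:ℝ) ≥ 0), Real.sqrt_nonneg 2,
      Real.one_le_sqrt.mpr (by norm_num : (1:ℝ) ≤ 2)]
  constructor
  · refine le_trans (aux_bound H K z) ?_
    gcongr
    rw [← hd]
  · refine le_trans (aux_bound K H z) ?_
    gcongr
    rw [← hd, symmDiff_comm]
end

section
/- Let H ⊆ ℝ be bounded and Borel measurable. Define g : ℝ → ℝ by g(z) = λ({x ∈ H : 2z − x ∈ H, x ≤ z}), Lebesgue measure of z⁻. Then g is continuous on ℝ. -/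
open Set MeasureTheory Filter Topology
open scoped ENNReal symmDiff

lemma symmDiff_inter3_subset_aux {α : Type*} (s u v w x : Set α) :
    (s ∩ (u ∩ v)) ∆ (s ∩ (w ∩ x)) ⊆ (u ∆ w) ∪ (v ∆ x) := by
  intro y hy
  simp only [Set.mem_symmDiff, Set.mem_inter_iff, Set.mem_union] at hy ⊢
  tauto

lemma subset_union_symmDiff_aux {α : Type*} (s t : Set α) : s ⊆ t ∪ s ∆ t := by
  intro x hx
  by_cases hxt : x ∈ t
  · exact Or.inl hxt
  · exact Or.inr (Set.mem_symmDiff.2 (Or.inl ⟨hx, hxt⟩))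

theorem stmt_11 (H : Set ℝ) (hH : MeasurableSet H)
    (hbb : BddBelow H) (hba : BddAbove H) :
    Continuous fun z : ℝ => (volume {x | x ∈ H ∧ 2 * z - x ∈ H ∧ x ≤ z}).toReal := by
  obtain ⟨a, ha⟩ := hbb
  obtain ⟨b, hb⟩ := hba
  have hHfin : volume H ≠ ⊤ :=
    ((measure_mono fun x hx => Set.mem_Icc.2 ⟨ha hx, hb hx⟩).trans_lt measure_Icc_lt_top).ne
  set F : C(ℝ × ℝ, ℝ) := ⟨fun p => 2 * p.1 - p.2, by fun_prop⟩ with hF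
  set f : ℝ → C(ℝ, ℝ) := fun z => F.curry z with hf
  have hfm : ∀ z, MeasurePreserving (f z) volume volume := fun z =>
    Measure.measurePreserving_sub_left volume (2 * z)
  set A : ℝ → Set ℝ := fun z => {x | x ∈ H ∧ 2 * z - x ∈ H ∧ x ≤ z} with hA
  have hAeq : ∀ z, A z = H ∩ ((f z ⁻¹' H) ∩ Iic z) := by
    intro z
    ext x
    simp only [hA, hf, hF, Set.mem_setOf_eq, Set.mem_inter_iff, Set.mem_preimage,
      ContinuousMap.curry_apply, ContinuousMap.coe_mk, Set.mem_Iic]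
  have hAfin : ∀ z, volume (A z) ≠ ⊤ := fun z =>
    ((measure_mono (fun x hx => hx.1)).trans_lt hHfin.lt_top).ne
  rw [continuous_iff_continuousAt]
  intro z₀
  have key : Tendsto (fun z => volume (A z ∆ A z₀)) (𝓝 z₀) (𝓝 0) := by
    have h1 : Tendsto (fun z => volume ((f z ⁻¹' H) ∆ (f z₀ ⁻¹' H))) (𝓝 z₀) (𝓝 0) :=
      tendsto_measure_symmDiff_preimage_nhds_zero
        ((ContinuousMap.continuous (F.curry)).tendsto z₀) (Eventually.of_forall hfm) (hfm z₀)
        hH.nullMeasurableSet hHfin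
    have h2 : Tendsto (fun z => ENNReal.ofReal (z - z₀) + ENNReal.ofReal (z₀ - z)) (𝓝 z₀)
        (𝓝 0) := by
      have t1 : Tendsto (fun z : ℝ => z - z₀) (𝓝 z₀) (𝓝 (z₀ - z₀)) :=
        Continuous.tendsto (by fun_prop) z₀
      have t2 : Tendsto (fun z : ℝ => z₀ - z) (𝓝 z₀) (𝓝 (z₀ - z₀)) :=
        Continuous.tendsto (by fun_prop) z₀
      rw [sub_self] at t1 t2
      have := (ENNReal.tendsto_ofReal t1).add (ENNReal.tendsto_ofReal t2)
      simpa using this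
    have hbound : ∀ z, volume (A z ∆ A z₀) ≤
        volume ((f z ⁻¹' H) ∆ (f z₀ ⁻¹' H)) +
          (ENNReal.ofReal (z - z₀) + ENNReal.ofReal (z₀ - z)) := by
      intro z
      have hsub : A z ∆ A z₀ ⊆
          ((f z ⁻¹' H) ∆ (f z₀ ⁻¹' H)) ∪ (Iic z ∆ Iic z₀) := by
        rw [hAeq z, hAeq z₀]
        exact symmDiff_inter3_subset_aux _ _ _ _ _
      refine (measure_mono hsub).trans ?_
      refine (measure_union_le _ _).trans (add_le_add le_rfl ?_)
      have hIic : Iic z ∆ Iic z₀ = Ioc z₀ z ∪ Ioc z z₀ := by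
        rw [Set.symmDiff_def, Set.Iic_sdiff_Iic, Set.Iic_sdiff_Iic]
      rw [hIic]
      refine (measure_union_le _ _).trans ?_
      rw [Real.volume_Ioc, Real.volume_Ioc]
    have hzero : ∀ z : ℝ, (0 : ℝ≥0∞) ≤ volume (A z ∆ A z₀) := fun z => zero_le
    simpa using tendsto_of_tendsto_of_tendsto_of_le_of_le
      (tendsto_const_nhds (α := ℝ)) (by simpa using h1.add h2) hzero hbound
  have main : Tendsto (fun z => volume (A z)) (𝓝 z₀) (𝓝 (volume (A z₀))) := by
    have hup : ∀ z, volume (A z) ≤ volume (A z₀) + volume (A z ∆ A z₀) := fun z =>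
      (measure_mono (subset_union_symmDiff_aux _ _)).trans (measure_union_le _ _)
    have hlo : ∀ z, volume (A z₀) - volume (A z ∆ A z₀) ≤ volume (A z) := by
      intro z
      rw [tsub_le_iff_right]
      refine (measure_mono (subset_union_symmDiff_aux (A z₀) (A z))).trans ?_
      refine (measure_union_le _ _).trans ?_
      rw [symmDiff_comm]
    have hupt : Tendsto (fun z => volume (A z₀) + volume (A z ∆ A z₀)) (𝓝 z₀)
        (𝓝 (volume (A z₀))) := by
      simpa using (tendsto_const_nhds (x := volume (A z₀)) (α := ℝ)).add key
    have hlot : Tendsto (fun z => volume (A z₀) - volume (A z ∆ A z₀)) (𝓝 z₀)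
        (𝓝 (volume (A z₀))) := by
      have := ENNReal.Tendsto.sub (tendsto_const_nhds (x := volume (A z₀)) (α := ℝ)) key
        (Or.inl (hAfin z₀))
      simpa using this
    exact tendsto_of_tendsto_of_tendsto_of_le_of_le hlot hupt hlo hup
  show ContinuousAt (fun z => (volume (A z)).toReal) z₀
  exact (ENNReal.tendsto_toReal (hAfin z₀)).comp main
end

section
/- Let H ⊆ ℝ be Lebesgue measurable with 0 < λ(H) < ∞ and suppose p ∈ MS^hf(H) = {x : λ(H ∩ (−∞, x]) = λ(H ∩ [x, ∞))}. Then MS^hf(H) = {p} if and only if for all δ > 0, λ(H ∩ (p−δ, p)) > 0 and λ(H ∩ (p, p+δ)) > 0. -/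
open Set MeasureTheory

lemma split_Iic16 (H : Set ℝ) (hH : MeasurableSet H) {a b : ℝ} (hab : a ≤ b) :
    volume (H ∩ Set.Iic b) = volume (H ∩ Set.Iic a) + volume (H ∩ Set.Ioc a b) := by
  rw [← measure_union ?_ (hH.inter measurableSet_Ioc), ← inter_union_distrib_left,
    Set.Iic_union_Ioc_eq_Iic hab]
  exact (Set.Iic_disjoint_Ioc le_rfl).mono inter_subset_right inter_subset_right

lemma split_Ici16 (H : Set ℝ) (hH : MeasurableSet H) {a b : ℝ} (hab : a ≤ b) :
    volume (H ∩ Set.Ici a) = volume (H ∩ Set.Ici b) + volume (H ∩ Set.Ico a b) := by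
  rw [← measure_union ?_ (hH.inter measurableSet_Ico), ← inter_union_distrib_left]
  · rw [Set.union_comm, Set.Ico_union_Ici_eq_Ici hab]
  · refine Disjoint.mono inter_subset_right inter_subset_right ?_
    rw [Set.disjoint_left]
    rintro x (hx : b ≤ x) ⟨-, hx2⟩
    exact absurd hx2 (not_lt.2 hx)

lemma ms_between16 (H : Set ℝ) (hH : MeasurableSet H) (hfin : volume H < ⊤) {a b : ℝ}
    (hab : a ≤ b)
    (ha : volume (H ∩ Set.Iic a) = volume (H ∩ Set.Ici a))
    (hb : volume (H ∩ Set.Iic b) = volume (H ∩ Set.Ici b)) :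
    volume (H ∩ Set.Ioo a b) = 0 := by
  have h1 := split_Iic16 H hH hab
  have h2 := split_Ici16 H hH hab
  have hne : volume (H ∩ Set.Iic a) ≠ ⊤ :=
    ((measure_mono inter_subset_left).trans_lt hfin).ne
  have key : volume (H ∩ Set.Iic a)
      = volume (H ∩ Set.Iic a) + (volume (H ∩ Set.Ioc a b) + volume (H ∩ Set.Ico a b)) := by
    calc volume (H ∩ Set.Iic a) = volume (H ∩ Set.Ici a) := ha
    _ = volume (H ∩ Set.Ici b) + volume (H ∩ Set.Ico a b) := h2
    _ = volume (H ∩ Set.Iic b) + volume (H ∩ Set.Ico a b) := by rw [hb]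
    _ = volume (H ∩ Set.Iic a) + (volume (H ∩ Set.Ioc a b) + volume (H ∩ Set.Ico a b)) := by
        rw [h1, add_assoc]
  have hz : volume (H ∩ Set.Ioc a b) + volume (H ∩ Set.Ico a b) = 0 :=
    ((ENNReal.add_right_inj hne).1 (key.symm.trans (add_zero _).symm).symm).symm
  exact measure_mono_null (inter_subset_inter_right _ Set.Ioo_subset_Ioc_self)
    (add_eq_zero.1 hz).1

theorem stmt_16 (H : Set ℝ) (hH : MeasurableSet H)
    (h0 : 0 < volume H) (hfin : volume H < ⊤) (p : ℝ)
    (hp : p ∈ {x : ℝ | volume (H ∩ Set.Iic x) = volume (H ∩ Set.Ici x)}) :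
    {x : ℝ | volume (H ∩ Set.Iic x) = volume (H ∩ Set.Ici x)} = {p} ↔
      ∀ δ > 0, 0 < volume (H ∩ Set.Ioo (p - δ) p) ∧
        0 < volume (H ∩ Set.Ioo p (p + δ)) := by
  constructor
  · intro hset δ hδ
    constructor
    · by_contra h
      push_neg at h
      have hz : volume (H ∩ Set.Ioo (p - δ) p) = 0 := le_antisymm h zero_le
      set q := p - δ/2 with hq
      have hqp : q < p := by simp [hq]; linarith
      have hsub1 : H ∩ Set.Ioc q p ⊆ (H ∩ Set.Ioo (p - δ) p) ∪ {p} := by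
        rintro x ⟨hxH, hx1, hx2⟩
        rcases eq_or_lt_of_le hx2 with rfl | hx2
        · exact Or.inr rfl
        · exact Or.inl ⟨hxH, by simp [hq] at hx1 ⊢; linarith, hx2⟩
      have hsub2 : H ∩ Set.Ico q p ⊆ (H ∩ Set.Ioo (p - δ) p) ∪ {q} := by
        rintro x ⟨hxH, hx1, hx2⟩
        rcases eq_or_lt_of_le hx1 with rfl | hx1
        · exact Or.inr rfl
        · exact Or.inl ⟨hxH, by simp [hq] at hx1 ⊢; linarith, hx2⟩
      have hz1 : volume (H ∩ Set.Ioc q p) = 0 :=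
        measure_mono_null hsub1 (by
          refine measure_union_null hz (Real.volume_singleton))
      have hz2 : volume (H ∩ Set.Ico q p) = 0 :=
        measure_mono_null hsub2 (by
          refine measure_union_null hz (Real.volume_singleton))
      have hqmem : volume (H ∩ Set.Iic q) = volume (H ∩ Set.Ici q) := by
        have e1 := split_Iic16 H hH hqp.le
        have e2 := split_Ici16 H hH hqp.le
        rw [hz1, add_zero] at e1
        rw [hz2, add_zero] at e2
        rw [← e1, e2, hp]
      have : q ∈ ({p} : Set ℝ) := hset ▸ hqmem
      simp at this
      linarith [hqp, this]
    · by_contra h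
      push_neg at h
      have hz : volume (H ∩ Set.Ioo p (p + δ)) = 0 := le_antisymm h zero_le
      set q := p + δ/2 with hq
      have hqp : p < q := by simp [hq]; linarith
      have hsub1 : H ∩ Set.Ioc p q ⊆ (H ∩ Set.Ioo p (p + δ)) ∪ {q} := by
        rintro x ⟨hxH, hx1, hx2⟩
        rcases eq_or_lt_of_le hx2 with rfl | hx2
        · exact Or.inr rfl
        · exact Or.inl ⟨hxH, hx1, by simp [hq] at hx2 ⊢; linarith⟩
      have hsub2 : H ∩ Set.Ico p q ⊆ (H ∩ Set.Ioo p (p + δ)) ∪ {p} := by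
        rintro x ⟨hxH, hx1, hx2⟩
        rcases eq_or_lt_of_le hx1 with rfl | hx1
        · exact Or.inr rfl
        · exact Or.inl ⟨hxH, hx1, by simp [hq] at hx2 ⊢; linarith⟩
      have hz1 : volume (H ∩ Set.Ioc p q) = 0 :=
        measure_mono_null hsub1 (measure_union_null hz Real.volume_singleton)
      have hz2 : volume (H ∩ Set.Ico p q) = 0 :=
        measure_mono_null hsub2 (measure_union_null hz Real.volume_singleton)
      have hqmem : volume (H ∩ Set.Iic q) = volume (H ∩ Set.Ici q) := by
        have e1 := split_Iic16 H hH hqp.le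
        have e2 := split_Ici16 H hH hqp.le
        rw [hz1, add_zero] at e1
        rw [hz2, add_zero] at e2
        rw [e1, ← e2, hp]
      have : q ∈ ({p} : Set ℝ) := hset ▸ hqmem
      simp at this
      linarith [hqp, this]
  · intro hδ
    ext x
    simp only [Set.mem_setOf_eq, Set.mem_singleton_iff]
    constructor
    · intro hx
      by_contra hxp
      rcases lt_or_gt_of_ne hxp with hlt | hgt
      · have hz := ms_between16 H hH hfin hlt.le hx hp
        have := (hδ (p - x) (by linarith)).1
        rw [show p - (p - x) = x by ring] at this
        exact absurd hz this.ne'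
      · have hz := ms_between16 H hH hfin hgt.le hp hx
        have := (hδ (x - p) (by linarith)).2
        rw [show p + (x - p) = x by ring] at this
        exact absurd hz this.ne'
    · rintro rfl
      exact hp
end

section
/- Let K : ℝ × ℝ → ℝ be a continuous strictly internal mean (a < K(a,b) < b whenever a < b, and K(a,b) = K(b,a)). For a < b define iteratively the finite sets S₁ = {a, b, K(a,b)} and Sₙ₊₁ = Sₙ ∪ {K(s,t) : s,t consecutive elements of Sₙ}, and let S_∞ = ⋃ₙ Sₙ. Then S_∞ is dense in [a, b]. -/
open Set

/-- Given a two-variable mean `K` and a set `F`, the set of values of `K` on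
consecutive (neighbouring) pairs of elements of `F`. -/
def Kbar (K : ℝ → ℝ → ℝ) (F : Set ℝ) : Set ℝ :=
  {z | ∃ s ∈ F, ∃ t ∈ F, s < t ∧ (∀ u ∈ F, u ≤ s ∨ t ≤ u) ∧ z = K s t}

/-- The iterated subdivision sets `S₁ = {a, b, K(a,b)}`, `Sₙ₊₁ = Sₙ ∪ K̄(Sₙ)`. -/
def iterSet (K : ℝ → ℝ → ℝ) (a b : ℝ) : ℕ → Set ℝ
  | 0 => {a, b, K a b}
  | n + 1 => iterSet K a b n ∪ Kbar K (iterSet K a b n)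

theorem stmt_18 (K : ℝ → ℝ → ℝ)
    (hcont : Continuous fun p : ℝ × ℝ => K p.1 p.2)
    (hsymm : ∀ a b : ℝ, K a b = K b a)
    (hstrict : ∀ a b : ℝ, a < b → a < K a b ∧ K a b < b)
    (a b : ℝ) (hab : a < b) :
    Set.Icc a b ⊆ closure (⋃ n : ℕ, iterSet K a b n) := by
  have hmono : ∀ n, iterSet K a b n ⊆ iterSet K a b (n + 1) := fun n => subset_union_left
  have hIcc : ∀ n, iterSet K a b n ⊆ Icc a b := by
    intro n
    induction n with
    | zero =>
      intro z hz
      simp only [iterSet, mem_insert_iff, mem_singleton_iff] at hz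
      rcases hz with rfl | rfl | rfl
      · exact ⟨le_rfl, hab.le⟩
      · exact ⟨hab.le, le_rfl⟩
      · exact ⟨(hstrict _ _ hab).1.le, (hstrict _ _ hab).2.le⟩
    | succ n ih =>
      intro z hz
      rcases hz with hz | hz
      · exact ih hz
      · obtain ⟨s, hs, t, ht, hst, -, rfl⟩ := hz
        have h := hstrict s t hst
        exact ⟨le_trans (ih hs).1 h.1.le, le_trans h.2.le (ih ht).2⟩
  have hfin : ∀ n, (iterSet K a b n).Finite := by
    intro n
    induction n with
    | zero =>
      show ({a, b, K a b} : Set ℝ).Finite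
      exact (((Set.finite_singleton _).insert _).insert _)
    | succ n ih =>
      refine ih.union (Set.Finite.subset ((ih.prod ih).image (fun p => K p.1 p.2)) ?_)
      rintro z ⟨s, hs, t, ht, -, -, rfl⟩
      exact ⟨(s, t), ⟨hs, ht⟩, rfl⟩
  have hamem : ∀ n, a ∈ iterSet K a b n := by
    intro n
    induction n with
    | zero => exact Or.inl rfl
    | succ n ih => exact Or.inl ih
  have hbmem : ∀ n, b ∈ iterSet K a b n := by
    intro n
    induction n with
    | zero => exact Or.inr (Or.inl rfl)
    | succ n ih => exact Or.inl ih
  intro x hx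
  by_contra hxc
  have hxS : ∀ n, x ∉ iterSet K a b n := fun n h =>
    hxc (subset_closure (mem_iUnion.mpr ⟨n, h⟩))
  have hax : a < x := lt_of_le_of_ne hx.1 (fun h => hxS 0 (h ▸ hamem 0))
  have hxb : x < b := lt_of_le_of_ne hx.2 (fun h => hxS 0 (h ▸ hbmem 0))
  set A : ℕ → Set ℝ := fun n => iterSet K a b n ∩ Iic x with hA
  set B : ℕ → Set ℝ := fun n => iterSet K a b n ∩ Ici x with hB
  have hAne : ∀ n, (A n).Nonempty := fun n => ⟨a, hamem n, hax.le⟩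
  have hBne : ∀ n, (B n).Nonempty := fun n => ⟨b, hbmem n, hxb.le⟩
  have hAfin : ∀ n, (A n).Finite := fun n => (hfin n).inter_of_left _
  have hBfin : ∀ n, (B n).Finite := fun n => (hfin n).inter_of_left _
  set s : ℕ → ℝ := fun n => sSup (A n) with hs
  set t : ℕ → ℝ := fun n => sInf (B n) with ht
  have hsmem : ∀ n, s n ∈ A n := fun n => (hAne n).csSup_mem (hAfin n)
  have htmem : ∀ n, t n ∈ B n := fun n => (hBne n).csInf_mem (hBfin n)
  have hslt : ∀ n, s n < x := fun n =>
    lt_of_le_of_ne (hsmem n).2 (fun h => hxS n (h ▸ (hsmem n).1))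
  have hxlt : ∀ n, x < t n := fun n =>
    lt_of_le_of_ne (htmem n).2 (fun h => hxS n (by rw [h]; exact (htmem n).1))
  have hsmax : ∀ n, ∀ u ∈ iterSet K a b n, u ≤ x → u ≤ s n := fun n u hu hux =>
    le_csSup (hAfin n).bddAbove ⟨hu, hux⟩
  have htmin : ∀ n, ∀ u ∈ iterSet K a b n, x ≤ u → t n ≤ u := fun n u hu hux =>
    csInf_le (hBfin n).bddBelow ⟨hu, hux⟩
  have hKmem : ∀ n, K (s n) (t n) ∈ iterSet K a b (n + 1) := by
    intro n
    refine Or.inr ⟨s n, (hsmem n).1, t n, (htmem n).1, (hslt n).trans (hxlt n), ?_, rfl⟩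
    intro u hu
    rcases le_or_gt u x with h | h
    · exact Or.inl (hsmax n u hu h)
    · exact Or.inr (htmin n u hu h.le)
  have hsmono : Monotone s := by
    apply monotone_nat_of_le_succ
    intro n
    exact csSup_le_csSup (hAfin (n + 1)).bddAbove (hAne n)
      (inter_subset_inter_left _ (hmono n))
  have htanti : Antitone t := by
    apply antitone_nat_of_succ_le
    intro n
    exact csInf_le_csInf (hBfin (n + 1)).bddBelow (hBne n)
      (inter_subset_inter_left _ (hmono n))
  have hbddA : BddAbove (Set.range s) := ⟨x, by rintro _ ⟨n, rfl⟩; exact (hslt n).le⟩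
  have hbddB : BddBelow (Set.range t) := ⟨x, by rintro _ ⟨n, rfl⟩; exact (hxlt n).le⟩
  set L : ℝ := ⨆ n, s n with hL
  set M : ℝ := ⨅ n, t n with hM
  have hLx : L ≤ x := ciSup_le fun n => (hslt n).le
  have hxM : x ≤ M := le_ciInf fun n => (hxlt n).le
  have hsL : ∀ n, s n ≤ L := fun n => le_ciSup hbddA n
  have hMt : ∀ n, M ≤ t n := fun n => ciInf_le hbddB n
  have htends : Filter.Tendsto s Filter.atTop (nhds L) := tendsto_atTop_ciSup hsmono hbddA
  have htendt : Filter.Tendsto t Filter.atTop (nhds M) := tendsto_atTop_ciInf htanti hbddB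
  rcases eq_or_lt_of_le (hLx.trans hxM) with heq | hlt
  · -- L = M, so L = x and s n → x, contradiction
    have hxL : x = L := le_antisymm (heq ▸ hxM) hLx
    refine hxc (mem_closure_of_tendsto (hxL ▸ htends) ?_)
    exact Filter.Eventually.of_forall fun n => mem_iUnion.mpr ⟨n, (hsmem n).1⟩
  · have hKLM := hstrict L M hlt
    have htendK : Filter.Tendsto (fun n => K (s n) (t n)) Filter.atTop (nhds (K L M)) := by
      have := (htends.prodMk_nhds htendt)
      exact (hcont.tendsto (L, M)).comp this
    have hev : ∀ᶠ n in Filter.atTop, K (s n) (t n) ∈ Ioo L M :=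
      htendK (isOpen_Ioo.mem_nhds ⟨hKLM.1, hKLM.2⟩)
    obtain ⟨n, hn⟩ := hev.exists
    rcases le_or_gt (K (s n) (t n)) x with h | h
    · have h1 : K (s n) (t n) ≤ s (n + 1) := hsmax (n + 1) _ (hKmem n) h
      exact absurd hn.1 (not_lt.mpr (h1.trans (hsL (n + 1))))
    · have h1 : t (n + 1) ≤ K (s n) (t n) := htmin (n + 1) _ (hKmem n) h.le
      exact absurd hn.2 (not_lt.mpr ((hMt (n + 1)).trans h1))
end

section
/- Let H ⊆ ℝ be a bounded countably infinite set. Then MS^a(H) = [liminf H, limsup H], where MS^a(H) is the set of all x ∈ ℝ for which there exists an increasing sequence of finite sets H₁ ⊆ H₂ ⊆ ... with ⋃ₙ Hₙ = H and the arithmetic means A(Hₙ) converging to x. -/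
open Set Filter Topology

noncomputable def amean (F : Finset ℝ) : ℝ := (∑ y ∈ F, y) / F.card

lemma accPt_inter_ball_infinite {H : Set ℝ} {c : ℝ} (hc : AccPt c (𝓟 H)) {ε : ℝ} (hε : 0 < ε) :
    (H ∩ Metric.ball c ε).Infinite := by
  rw [accPt_iff_nhds] at hc
  by_contra hfin
  rw [Set.not_infinite] at hfin
  have hfin' : ((H ∩ Metric.ball c ε) \ {c}).Finite := hfin.diff
  have hU : ((H ∩ Metric.ball c ε) \ {c})ᶜ ∈ 𝓝 c :=
    hfin'.isClosed.isOpen_compl.mem_nhds (by simp)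
  obtain ⟨y, ⟨⟨hyc, hyb⟩, hyH⟩, hy3⟩ :=
    hc _ (Filter.inter_mem hU (Metric.ball_mem_nhds c hε))
  exact hyc ⟨⟨hyH, hyb⟩, hy3⟩

lemma drag {H : Set ℝ} {a b c x : ℝ} (hab : a ≤ b) (hH : H ⊆ Set.Icc a b)
    (hc : AccPt c (𝓟 H)) (hcab : c ∈ Set.Icc a b)
    (F : Finset ℝ) (hF : ↑F ⊆ H) (hne : F.Nonempty)
    {ε : ℝ} (hε : 0 < ε) (hstep : (b - a) / (F.card + 1) ≤ ε)
    (hx1 : min c (amean F) ≤ x) (hx2 : x ≤ max c (amean F)) :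
    ∃ F' : Finset ℝ, F ⊆ F' ∧ ↑F' ⊆ H ∧ F'.Nonempty ∧ |amean F' - x| ≤ 2 * ε := by
  set m : ℝ := (F.card : ℝ) with hm
  set S : ℝ := ∑ y ∈ F, y with hSdef
  have hm1 : 1 ≤ m := by
    have h : 1 ≤ F.card := hne.card_pos
    rw [hm]
    exact_mod_cast h
  have hSa : m * a ≤ S := by
    have := Finset.card_nsmul_le_sum F id a (fun y hy => (hH (hF hy)).1)
    simpa [nsmul_eq_mul] using this
  have hSb : S ≤ m * b := by
    have := Finset.sum_le_card_nsmul F id b (fun y hy => (hH (hF hy)).2)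
    simpa [nsmul_eq_mul] using this
  set g : ℕ → ℝ := fun k => (S + k * c) / (m + k) with hg
  have hden : ∀ k : ℕ, (0 : ℝ) < m + k := by
    intro k
    have : (0:ℝ) ≤ (k:ℝ) := Nat.cast_nonneg k
    linarith
  have hg0 : g 0 = amean F := by simp [hg, amean]; rfl
  have hnum : |m * c - S| ≤ m * (b - a) := by
    rw [abs_le]
    constructor
    · nlinarith [hcab.1]
    · nlinarith [hcab.2]
  have hgdiff : ∀ k, |g (k + 1) - g k| ≤ ε := by
    intro k
    have h1 : g (k + 1) - g k = (m * c - S) / ((m + k) * (m + k + 1)) := by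
      have hk1 : (((k : ℕ) + 1 : ℕ) : ℝ) = (k : ℝ) + 1 := by push_cast; ring
      have d1 := hden k
      have d2 : (0:ℝ) < m + k + 1 := by linarith
      rw [hg]
      simp only [hk1]
      rw [div_sub_div _ _ (by linarith : (m + ((k:ℝ)+1)) ≠ 0) (ne_of_gt d1),
        div_eq_div_iff (by positivity) (by positivity)]
      ring
    rw [h1, abs_div, abs_of_pos (by positivity : (0:ℝ) < (m + k) * (m + k + 1))]
    have h2 : |m * c - S| / ((m + k) * (m + k + 1)) ≤ m * (b - a) / (m * (m + 1)) := by
      have d1 := hden k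
      have hk0 : (0:ℝ) ≤ (k:ℝ) := Nat.cast_nonneg k
      have : m * (m+1) ≤ (m + k) * (m + k + 1) := by nlinarith
      have hmm : (0:ℝ) < m * (m+1) := by nlinarith
      calc |m * c - S| / ((m + k) * (m + k + 1)) ≤ (m * (b-a)) / ((m + k) * (m + k + 1)) := by
            apply div_le_div_of_nonneg_right ?_ (by positivity)
            · exact hnum
          _ ≤ m * (b - a) / (m * (m + 1)) := by
            apply div_le_div_of_nonneg_left ?_ hmm this
            nlinarith
    have h3 : m * (b - a) / (m * (m + 1)) = (b - a) / (m + 1) := by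
      rw [mul_div_mul_left _ _ (by linarith : m ≠ 0)]
    calc |m * c - S| / ((m + k) * (m + k + 1)) ≤ (b-a)/(m+1) := by rw [← h3]; exact h2
      _ ≤ ε := hstep
  have hgc : ∀ k : ℕ, |g k - c| ≤ m * (b - a) / (m + k) := by
    intro k
    have d1 := hden k
    have h1 : g k - c = (S - m * c) / (m + k) := by
      rw [hg]; field_simp; ring
    rw [h1, abs_div, abs_of_pos d1]
    gcongr
    rw [abs_sub_comm]; exact hnum
  obtain ⟨K, hK⟩ : ∃ K : ℕ, |g K - c| ≤ ε := by
    refine ⟨⌈m * (b - a) / ε⌉₊, (hgc _).trans ?_⟩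
    rw [div_le_iff₀ (hden _)]
    have h1 : m * (b-a) / ε ≤ (⌈m * (b - a) / ε⌉₊ : ℝ) := Nat.le_ceil _
    have : m * (b - a) / ε ≤ m + (⌈m * (b - a) / ε⌉₊ : ℝ) := by linarith
    calc m * (b-a) = (m * (b-a)/ε) * ε := by field_simp
      _ ≤ (m + (⌈m * (b - a) / ε⌉₊ : ℝ)) * ε := by
          apply mul_le_mul_of_nonneg_right this hε.le
      _ = ε * (m + (⌈m * (b - a) / ε⌉₊ : ℝ)) := mul_comm _ _
  have hkey : ∃ k : ℕ, |g k - x| ≤ ε := by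
    by_contra h
    push_neg at h
    rcases lt_or_ge (g 0) x with hlt | hge
    · have hcx : x ≤ c := by
        rcases max_cases c (amean F) with ⟨h1, _⟩ | ⟨h1, h2⟩
        · rw [h1] at hx2; exact hx2
        · rw [h1, ← hg0] at hx2; linarith
      have hall : ∀ k, g k < x := by
        intro k
        induction k with
        | zero => exact hlt
        | succ n ih =>
          have h1 := h n
          rw [abs_of_neg (by linarith : g n - x < 0)] at h1
          have := abs_le.mp (hgdiff n)
          linarith [this.2]
      have h1 := h K
      rw [abs_of_neg (by linarith [hall K] : g K - x < 0)] at h1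
      have h3 := (abs_le.mp hK).1
      linarith
    · have hge' : x < g 0 := by
        have h0 := h 0
        rw [abs_of_nonneg (by linarith : 0 ≤ g 0 - x)] at h0
        linarith
      have hcx : c ≤ x := by
        rcases min_cases c (amean F) with ⟨h1, _⟩ | ⟨h1, h2⟩
        · rw [h1] at hx1; exact hx1
        · rw [h1, ← hg0] at hx1; linarith
      have hall : ∀ k, x < g k := by
        intro k
        induction k with
        | zero => exact hge'
        | succ n ih =>
          have h1 := h n
          rw [abs_of_pos (by linarith : 0 < g n - x)] at h1
          have := abs_le.mp (hgdiff n)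
          linarith [this.1]
      have h1 := h K
      rw [abs_of_pos (by linarith [hall K] : 0 < g K - x)] at h1
      have h3 := (abs_le.mp hK).2
      linarith
  obtain ⟨k, hk⟩ := hkey
  obtain ⟨P, hPsub, hPcard⟩ :=
    (((accPt_inter_ball_infinite hc hε).diff F.finite_toSet)).exists_subset_card_eq k
  have hdisj : Disjoint F P := by
    rw [Finset.disjoint_right]
    intro p hp
    exact fun hpF => (hPsub hp).2 hpF
  refine ⟨F ∪ P, Finset.subset_union_left, ?_, hne.mono Finset.subset_union_left, ?_⟩
  · intro y hy
    rcases Finset.mem_union.mp (by exact_mod_cast hy) with h1 | h1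
    · exact hF h1
    · exact (hPsub h1).1.1
  · have hcard : ((F ∪ P).card : ℝ) = m + k := by
      rw [Finset.card_union_of_disjoint hdisj, hPcard]; push_cast; ring
    have hsum : ∑ y ∈ F ∪ P, y = S + ∑ y ∈ P, y := by
      rw [Finset.sum_union hdisj]
    have hPc : |∑ y ∈ P, y - k * c| ≤ k * ε := by
      have h1 : ∑ y ∈ P, y - (k:ℝ) * c = ∑ y ∈ P, (y - c) := by
        rw [Finset.sum_sub_distrib, Finset.sum_const, hPcard, nsmul_eq_mul]
      rw [h1]
      calc |∑ y ∈ P, (y - c)| ≤ ∑ y ∈ P, |y - c| := Finset.abs_sum_le_sum_abs _ _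
        _ ≤ ∑ _y ∈ P, ε := by
            apply Finset.sum_le_sum
            intro y hy
            have := (hPsub hy).1.2
            rw [Metric.mem_ball, Real.dist_eq] at this
            exact this.le
        _ = k * ε := by rw [Finset.sum_const, hPcard, nsmul_eq_mul]
    have hdk := hden k
    have hmean : amean (F ∪ P) = (S + ∑ y ∈ P, y) / (m + k) := by
      rw [amean, hsum, hcard]
    have h2 : |amean (F ∪ P) - g k| ≤ ε := by
      rw [hmean, hg]
      have h3 : (S + ∑ y ∈ P, y) / (m + k) - (S + k * c) / (m + k)
          = (∑ y ∈ P, y - k * c) / (m + k) := by ring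
      rw [h3, abs_div, abs_of_pos hdk, div_le_iff₀ hdk]
      calc |∑ y ∈ P, y - k * c| ≤ k * ε := hPc
        _ ≤ (m + k) * ε := by
            apply mul_le_mul_of_nonneg_right ?_ hε.le
            linarith [Nat.cast_nonneg (α := ℝ) k]
        _ = ε * (m + k) := mul_comm _ _
    calc |amean (F ∪ P) - x| ≤ |amean (F ∪ P) - g k| + |g k - x| := abs_sub_le _ _ _
      _ ≤ ε + ε := add_le_add h2 hk
      _ = 2 * ε := by ring

lemma grow_step {H : Set ℝ} {a b x : ℝ} (hab : a ≤ b) (hH : H ⊆ Set.Icc a b)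
    (hinf : H.Infinite)
    (hL : sInf (derivedSet H) ∈ derivedSet H) (hU : sSup (derivedSet H) ∈ derivedSet H)
    (hx : x ∈ Set.Icc (sInf (derivedSet H)) (sSup (derivedSet H)))
    (F : Finset ℝ) (hF : ↑F ⊆ H) (n : ℕ) (p : ℝ) (hp : p ∈ H) :
    ∃ F' : Finset ℝ, F ⊆ F' ∧ ↑F' ⊆ H ∧ F'.Nonempty ∧ p ∈ F' ∧
      |amean F' - x| ≤ 2 * ((b - a + 1) / (n + 1)) := by
  have hDsub : derivedSet H ⊆ Set.Icc a b :=
    (derivedSet_subset_closure H).trans (closure_minimal hH isClosed_Icc)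
  obtain ⟨Q, hQsub, hQcard⟩ := hinf.exists_subset_card_eq n
  set F₁ : Finset ℝ := (F ∪ {p}) ∪ Q with hF₁
  have hF₁H : ↑F₁ ⊆ H := by
    intro y hy
    rcases Finset.mem_union.mp (by exact_mod_cast hy) with h1 | h1
    · rcases Finset.mem_union.mp h1 with h2 | h2
      · exact hF h2
      · rw [Finset.mem_singleton.mp h2]; exact hp
    · exact hQsub h1
  have hF₁ne : F₁.Nonempty := ⟨p, by simp [hF₁]⟩
  have hcard : (n : ℝ) ≤ (F₁.card : ℝ) := by
    have : Q.card ≤ F₁.card := Finset.card_le_card (Finset.subset_union_right)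
    rw [hQcard] at this
    exact_mod_cast this
  have hε : (0:ℝ) < (b - a + 1) / (n + 1) := by
    apply div_pos (by linarith) (by positivity)
  have hstep : (b - a) / ((F₁.card : ℝ) + 1) ≤ (b - a + 1) / (n + 1) := by
    have h1 : (0:ℝ) < (n:ℝ) + 1 := by positivity
    calc (b - a) / ((F₁.card : ℝ) + 1) ≤ (b - a) / ((n:ℝ) + 1) := by
          gcongr
      _ ≤ (b - a + 1) / ((n:ℝ) + 1) := by gcongr; linarith
  rcases le_or_gt x (amean F₁) with hcase | hcase
  · obtain ⟨F', h1, h2, h3, h4⟩ := drag hab hH hL (hDsub hL) F₁ hF₁H hF₁ne hε hstep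
      (le_trans (min_le_left _ _) hx.1) (le_trans hcase (le_max_right _ _))
    exact ⟨F', (Finset.subset_union_left.trans Finset.subset_union_left).trans h1,
      h2, h3, h1 (by simp [hF₁]), h4⟩
  · obtain ⟨F', h1, h2, h3, h4⟩ := drag hab hH hU (hDsub hU) F₁ hF₁H hF₁ne hε hstep
      (le_trans (min_le_right _ _) hcase.le) (le_trans hx.2 (le_max_left _ _))
    exact ⟨F', (Finset.subset_union_left.trans Finset.subset_union_left).trans h1,
      h2, h3, h1 (by simp [hF₁]), h4⟩

lemma tail_finite_above {H : Set ℝ} (hba : BddAbove H) {t : ℝ}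
    (ht : ∀ c ∈ derivedSet H, c < t) : {y | y ∈ H ∧ t ≤ y}.Finite := by
  by_contra h
  have hi : Set.Infinite {y | y ∈ H ∧ t ≤ y} := h
  obtain ⟨b', hb'⟩ := hba
  have hsub : {y | y ∈ H ∧ t ≤ y} ⊆ Set.Icc t b' := fun y hy => ⟨hy.2, hb' hy.1⟩
  obtain ⟨c, hcmem, hacc⟩ := hi.exists_accPt_of_subset_isCompact isCompact_Icc hsub
  have hcD : c ∈ derivedSet H :=
    hacc.mono (principal_mono.mpr (fun y hy => hy.1))
  exact absurd hcmem.1 (not_le.mpr (ht c hcD))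

lemma tail_finite_below {H : Set ℝ} (hbb : BddBelow H) {t : ℝ}
    (ht : ∀ c ∈ derivedSet H, t < c) : {y | y ∈ H ∧ y ≤ t}.Finite := by
  by_contra h
  have hi : Set.Infinite {y | y ∈ H ∧ y ≤ t} := h
  obtain ⟨a', ha'⟩ := hbb
  have hsub : {y | y ∈ H ∧ y ≤ t} ⊆ Set.Icc a' t := fun y hy => ⟨ha' hy.1, hy.2⟩
  obtain ⟨c, hcmem, hacc⟩ := hi.exists_accPt_of_subset_isCompact isCompact_Icc hsub
  have hcD : c ∈ derivedSet H :=
    hacc.mono (principal_mono.mpr (fun y hy => hy.1))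
  exact absurd hcmem.2 (not_le.mpr (ht c hcD))

lemma card_tendsto_atTop {H : Set ℝ} (hinf : H.Infinite) (Hn : ℕ → Finset ℝ)
    (hmono : ∀ m n, m ≤ n → Hn m ⊆ Hn n) (hUn : (⋃ n, ((Hn n : Set ℝ))) = H) :
    Tendsto (fun n => ((Hn n).card : ℝ)) atTop atTop := by
  have hnat : Tendsto (fun n => (Hn n).card) atTop atTop := by
    rw [tendsto_atTop_atTop]
    intro N
    obtain ⟨T, hTsub, hTcard⟩ := hinf.exists_subset_card_eq N
    have hex : ∀ t ∈ T, ∃ n, t ∈ Hn n := by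
      intro t ht
      have h1 : t ∈ ⋃ n, ((Hn n : Set ℝ)) := hUn ▸ hTsub ht
      simpa using h1
    classical
    set f : ℝ → ℕ := fun t => if h : ∃ n, t ∈ Hn n then Nat.find h else 0 with hf
    refine ⟨T.sup f, fun n hn => ?_⟩
    have hTsub' : T ⊆ Hn n := by
      intro t ht
      have h := hex t ht
      have h1 : t ∈ Hn (f t) := by
        simp only [hf, dif_pos h]
        exact Nat.find_spec h
      exact hmono _ _ ((Finset.le_sup ht).trans hn) h1
    calc N = T.card := hTcard.symm
      _ ≤ (Hn n).card := Finset.card_le_card hTsub'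
  exact tendsto_natCast_atTop_atTop.comp hnat


theorem stmt_19 (H : Set ℝ) (hcount : H.Countable) (hinf : H.Infinite)
    (hbb : BddBelow H) (hba : BddAbove H) :
    {x : ℝ | ∃ Hn : ℕ → Finset ℝ,
        (∀ n, Hn n ⊆ Hn (n + 1)) ∧ (∀ n, (Hn n).Nonempty) ∧
        (⋃ n, ((Hn n : Set ℝ))) = H ∧
        Tendsto (fun n => (∑ y ∈ Hn n, y) / (Hn n).card) atTop (𝓝 x)} =
      Set.Icc (sInf (derivedSet H)) (sSup (derivedSet H)) := by
  classical
  have hHne : H.Nonempty := hinf.nonempty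
  set a := sInf H with ha
  set b := sSup H with hb
  have hH : H ⊆ Set.Icc a b := fun y hy => ⟨csInf_le hbb hy, le_csSup hba hy⟩
  have hab : a ≤ b := by
    obtain ⟨y, hy⟩ := hHne
    have h := hH hy
    linarith [h.1, h.2]
  set D := derivedSet H with hD
  set L := sInf D with hL
  set U := sSup D with hU
  have hDsub : D ⊆ Set.Icc a b :=
    (derivedSet_subset_closure H).trans (closure_minimal hH isClosed_Icc)
  have hDne : D.Nonempty := by
    obtain ⟨c, _, hacc⟩ := hinf.exists_accPt_of_subset_isCompact isCompact_Icc hH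
    exact ⟨c, hacc⟩
  have hDbb : BddBelow D := BddBelow.mono hDsub bddBelow_Icc
  have hDba : BddAbove D := BddAbove.mono hDsub bddAbove_Icc
  have hLD : L ∈ D := (isClosed_derivedSet H).csInf_mem hDne hDbb
  have hUD : U ∈ D := (isClosed_derivedSet H).csSup_mem hDne hDba
  ext x
  simp only [Set.mem_setOf_eq, Set.mem_Icc]
  constructor
  · rintro ⟨Hn, hmono, hne, hUn, hlim⟩
    have hm : Monotone Hn := monotone_nat_of_le_succ (fun n => Finset.le_iff_subset.mpr (hmono n))
    have hmono' : ∀ m n, m ≤ n → Hn m ⊆ Hn n := fun m n h => Finset.le_iff_subset.mp (hm h)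
    have hHnH : ∀ n, ↑(Hn n) ⊆ H := fun n =>
      hUn ▸ Set.subset_iUnion (fun k => ((Hn k : Set ℝ))) n
    have hcardpos : ∀ n, (0:ℝ) < ((Hn n).card : ℝ) := fun n => by
      exact_mod_cast (hne n).card_pos
    have hcardT := card_tendsto_atTop hinf Hn hmono' hUn
    constructor
    · -- L ≤ x
      have key : ∀ ε > (0:ℝ), L ≤ x + ε := by
        intro ε hε
        set t := L - ε/2 with hts
        have htail : {y | y ∈ H ∧ y ≤ t}.Finite := by
          apply tail_finite_below hbb
          intro c hc
          have h1 : L ≤ c := csInf_le hDbb hc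
          rw [hts]; linarith
        set Bf := htail.toFinset with hBf
        set C := ∑ y ∈ Bf, (t - y) with hC
        have hC0 : (0:ℝ) ≤ C := by
          apply Finset.sum_nonneg
          intro y hy
          have h1 : y ∈ {y | y ∈ H ∧ y ≤ t} := htail.mem_toFinset.mp hy
          linarith [h1.2]
        have hmeanlb : ∀ n, t - C/((Hn n).card:ℝ) ≤ (∑ y ∈ Hn n, y)/((Hn n).card:ℝ) := by
          intro n
          have hsplit : ∑ y ∈ Hn n, (t - y) ≤ C := by
            rw [← Finset.sum_filter_add_sum_filter_not (Hn n) (fun y => y ≤ t)]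
            have h1 : ∑ y ∈ (Hn n).filter (fun y => y ≤ t), (t - y) ≤ C := by
              apply Finset.sum_le_sum_of_subset_of_nonneg
              · intro y hy
                rw [Finset.mem_filter] at hy
                rw [hBf, Set.Finite.mem_toFinset]
                exact ⟨hHnH n hy.1, hy.2⟩
              · intro y hy _
                have h2 : y ∈ {y | y ∈ H ∧ y ≤ t} := htail.mem_toFinset.mp hy
                linarith [h2.2]
            have h2 : ∑ y ∈ (Hn n).filter (fun y => ¬ y ≤ t), (t - y) ≤ 0 := by
              apply Finset.sum_nonpos
              intro y hy
              rw [Finset.mem_filter] at hy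
              push_neg at hy
              linarith [hy.2]
            linarith
          have hexp : ∑ y ∈ Hn n, (t - y) = ((Hn n).card : ℝ) * t - ∑ y ∈ Hn n, y := by
            rw [Finset.sum_sub_distrib, Finset.sum_const, nsmul_eq_mul]
          have hsumlb : ((Hn n).card : ℝ) * t - C ≤ ∑ y ∈ Hn n, y := by
            rw [hexp] at hsplit; linarith
          have hc := hcardpos n
          rw [le_div_iff₀ hc, sub_mul, div_mul_cancel₀ _ (ne_of_gt hc)]
          linarith
        have hev : ∀ᶠ n in atTop, L - ε ≤ (∑ y ∈ Hn n, y)/((Hn n).card:ℝ) := by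
          filter_upwards [hcardT.eventually_ge_atTop (2*C/ε)] with n hn
          have hc := hcardpos n
          have h2 : C / ((Hn n).card:ℝ) ≤ ε/2 := by
            rw [div_le_iff₀ hc]
            have h3 : (2*C/ε) * (ε/2) = C := by field_simp
            nlinarith [mul_le_mul_of_nonneg_right hn (by linarith : (0:ℝ) ≤ ε/2)]
          have h4 := hmeanlb n
          rw [hts] at h4
          linarith
        have h5 := ge_of_tendsto hlim hev
        linarith
      by_contra hcon
      push_neg at hcon
      have h6 := key ((L - x)/2) (by linarith)
      linarith
    · -- x ≤ U
      have key : ∀ ε > (0:ℝ), x ≤ U + ε := by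
        intro ε hε
        set t := U + ε/2 with hts
        have htail : {y | y ∈ H ∧ t ≤ y}.Finite := by
          apply tail_finite_above hba
          intro c hc
          have h1 : c ≤ U := le_csSup hDba hc
          rw [hts]; linarith
        set Bf := htail.toFinset with hBf
        set C := ∑ y ∈ Bf, (y - t) with hC
        have hC0 : (0:ℝ) ≤ C := by
          apply Finset.sum_nonneg
          intro y hy
          have h1 : y ∈ {y | y ∈ H ∧ t ≤ y} := htail.mem_toFinset.mp hy
          linarith [h1.2]
        have hmeanub : ∀ n, (∑ y ∈ Hn n, y)/((Hn n).card:ℝ) ≤ t + C/((Hn n).card:ℝ) := by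
          intro n
          have hsplit : ∑ y ∈ Hn n, (y - t) ≤ C := by
            rw [← Finset.sum_filter_add_sum_filter_not (Hn n) (fun y => t ≤ y)]
            have h1 : ∑ y ∈ (Hn n).filter (fun y => t ≤ y), (y - t) ≤ C := by
              apply Finset.sum_le_sum_of_subset_of_nonneg
              · intro y hy
                rw [Finset.mem_filter] at hy
                rw [hBf, Set.Finite.mem_toFinset]
                exact ⟨hHnH n hy.1, hy.2⟩
              · intro y hy _
                have h2 : y ∈ {y | y ∈ H ∧ t ≤ y} := htail.mem_toFinset.mp hy
                linarith [h2.2]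
            have h2 : ∑ y ∈ (Hn n).filter (fun y => ¬ t ≤ y), (y - t) ≤ 0 := by
              apply Finset.sum_nonpos
              intro y hy
              rw [Finset.mem_filter] at hy
              push_neg at hy
              linarith [hy.2]
            linarith
          have hexp : ∑ y ∈ Hn n, (y - t) = ∑ y ∈ Hn n, y - ((Hn n).card : ℝ) * t := by
            rw [Finset.sum_sub_distrib, Finset.sum_const, nsmul_eq_mul]
          have hsumub : ∑ y ∈ Hn n, y ≤ ((Hn n).card : ℝ) * t + C := by
            rw [hexp] at hsplit; linarith
          have hc := hcardpos n
          rw [div_le_iff₀ hc, add_mul, div_mul_cancel₀ _ (ne_of_gt hc)]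
          linarith
        have hev : ∀ᶠ n in atTop, (∑ y ∈ Hn n, y)/((Hn n).card:ℝ) ≤ U + ε := by
          filter_upwards [hcardT.eventually_ge_atTop (2*C/ε)] with n hn
          have hc := hcardpos n
          have h2 : C / ((Hn n).card:ℝ) ≤ ε/2 := by
            rw [div_le_iff₀ hc]
            have h3 : (2*C/ε) * (ε/2) = C := by field_simp
            nlinarith [mul_le_mul_of_nonneg_right hn (by linarith : (0:ℝ) ≤ ε/2)]
          have h4 := hmeanub n
          rw [hts] at h4
          linarith
        have h5 := le_of_tendsto hlim hev
        linarith
      by_contra hcon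
      push_neg at hcon
      have h6 := key ((x - U)/2) (by linarith)
      linarith
  · rintro ⟨hxL, hxU⟩
    obtain ⟨e, he⟩ := hcount.exists_eq_range hHne
    have hek : ∀ k, e k ∈ H := fun k => by rw [he]; exact Set.mem_range_self k
    have key : ∀ (F : Finset ℝ) (n : ℕ) (p : ℝ), ↑F ⊆ H → p ∈ H →
        ∃ F' : Finset ℝ, F ⊆ F' ∧ ↑F' ⊆ H ∧ F'.Nonempty ∧ p ∈ F' ∧
          |amean F' - x| ≤ 2 * ((b - a + 1) / (n + 1)) := fun F n p hF hp =>
      grow_step hab hH hinf hLD hUD ⟨hxL, hxU⟩ F hF n p hp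
    choose! f hf1 hf2 hf3 hf4 hf5 using key
    set G : ℕ → Finset ℝ := fun n => Nat.rec {e 0} (fun n Fn => f Fn n (e (n+1))) n with hG
    have hGsucc : ∀ n, G (n+1) = f (G n) n (e (n+1)) := fun n => rfl
    have hG0 : G 0 = {e 0} := rfl
    have hGH : ∀ n, ↑(G n) ⊆ H := by
      intro n
      induction n with
      | zero =>
        rw [hG0]
        intro y hy
        rw [Finset.coe_singleton, Set.mem_singleton_iff] at hy
        rw [hy]; exact hek 0
      | succ n ih =>
        rw [hGsucc]
        exact hf2 (G n) n (e (n+1)) ih (hek (n+1))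
    have hGmono : ∀ n, G n ⊆ G (n+1) := fun n => by
      rw [hGsucc]
      exact hf1 (G n) n (e (n+1)) (hGH n) (hek (n+1))
    have hGne : ∀ n, (G n).Nonempty := by
      intro n
      cases n with
      | zero => exact ⟨e 0, by rw [hG0]; exact Finset.mem_singleton_self _⟩
      | succ n =>
        rw [hGsucc]
        exact hf3 (G n) n (e (n+1)) (hGH n) (hek (n+1))
    have hGe : ∀ n, e n ∈ G n := by
      intro n
      cases n with
      | zero => rw [hG0]; exact Finset.mem_singleton_self _
      | succ n =>
        rw [hGsucc]
        exact hf4 (G n) n (e (n+1)) (hGH n) (hek (n+1))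
    refine ⟨G, hGmono, hGne, ?_, ?_⟩
    · apply Set.Subset.antisymm
      · exact Set.iUnion_subset hGH
      · intro y hy
        rw [he] at hy
        obtain ⟨k, rfl⟩ := hy
        exact Set.mem_iUnion.mpr ⟨k, hGe k⟩
    · have hbound : ∀ n, |amean (G (n+1)) - x| ≤ 2 * ((b - a + 1)/((n:ℝ)+1)) := fun n =>
        hf5 (G n) n (e (n+1)) (hGH n) (hek (n+1))
      have heq : (fun n => (∑ y ∈ G n, y) / ((G n).card : ℝ)) = fun n => amean (G n) := rfl
      rw [heq, tendsto_iff_dist_tendsto_zero]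
      apply squeeze_zero' (Filter.Eventually.of_forall (fun n => dist_nonneg))
        (g := fun n : ℕ => (2*(b-a+1))/(n:ℝ))
      · rw [Filter.eventually_atTop]
        refine ⟨1, fun n hn => ?_⟩
        cases n with
        | zero => omega
        | succ m =>
          rw [Real.dist_eq]
          have h1 := hbound m
          have h2 : 2 * ((b - a + 1)/((m:ℝ)+1)) = (2*(b-a+1))/((m+1 : ℕ):ℝ) := by
            push_cast; ring
          rw [h2] at h1
          exact h1
      · exact tendsto_const_div_atTop_nhds_zero_nat (2*(b-a+1))
end
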